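/- The subgroup of D_n fixing both e_n and e_{2n} has index 2^{2n−1}(2^{n−1} − 1) in D_n, for n > 1. Equivalently: the orbit of the pair (e_{2n}, e_n) under D_n has size (2^{n−1} − 1)·2^{2n−1}, consisting of all pairs (v, w) with v a nonzero base vector and w ∈ F_2^{2n} with ω(w, v) = 1. -/

import Mathlib

open Matrix

def Omega (n : ℕ) : Matrix (Fin n ⊕ Fin n) (Fin n ⊕ Fin n) (ZMod 2) :=
  Matrix.fromBlocks 0 1 1 0

def symplForm (n : ℕ) (v w : Fin n ⊕ Fin n → ZMod 2) : ZMod 2 :=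
  dotProduct v ((Omega n).mulVec w)

def base (n : ℕ) (hn : 0 < n) : Set (Fin n ⊕ Fin n → ZMod 2) :=
  {v | (∀ i : Fin n, v (Sum.inl i) = 0) ∧ v (Sum.inr ⟨0, hn⟩) = 0}

/-- The orbit of the pair `(e_{2n}, e_n)` under the distillation subgroup `Dₙ`. -/
def pairOrbit (n : ℕ) (hn : 1 < n) :
    Set ((Fin n ⊕ Fin n → ZMod 2) × (Fin n ⊕ Fin n → ZMod 2)) :=
  {p | ∃ M : Matrix (Fin n ⊕ Fin n) (Fin n ⊕ Fin n) (ZMod 2),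
    Mᵀ * Omega n * M = Omega n ∧
    M.mulVec '' base n (by omega) = base n (by omega) ∧
    M.mulVec (Pi.single (Sum.inr ⟨n - 1, by omega⟩) 1) = p.1 ∧
    M.mulVec (Pi.single (Sum.inl ⟨n - 1, by omega⟩) 1) = p.2}

namespace PairAux

lemma zmod2_ne (a : ZMod 2) (h : a ≠ 0) : a = 1 := by revert h; revert a; decide

lemma zmod2_add_self (a : ZMod 2) : a + a = 0 := by revert a; decide

lemma zmod2_abb (a b : ZMod 2) : a + b + b = a := by revert a b; decide

lemma omega_mulVec (n : ℕ) (v : Fin n ⊕ Fin n → ZMod 2) :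
    (Omega n).mulVec v = Sum.elim (v ∘ Sum.inr) (v ∘ Sum.inl) := by
  unfold Omega
  rw [fromBlocks_mulVec]
  simp

lemma omega_mul_omega (n : ℕ) : Omega n * Omega n = 1 := by
  unfold Omega
  rw [fromBlocks_multiply]
  simp [← Matrix.fromBlocks_one]

lemma symplForm_eq (n : ℕ) (w v : Fin n ⊕ Fin n → ZMod 2) :
    symplForm n w v = (w ∘ Sum.inl) ⬝ᵥ (v ∘ Sum.inr) + (w ∘ Sum.inr) ⬝ᵥ (v ∘ Sum.inl) := by
  unfold symplForm
  rw [omega_mulVec]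
  conv_lhs => rw [← Sum.elim_comp_inl_inr w]
  rw [sumElim_dotProduct_sumElim]

lemma symplForm_mulVec {n : ℕ} {M : Matrix (Fin n ⊕ Fin n) (Fin n ⊕ Fin n) (ZMod 2)}
    (hM : Mᵀ * Omega n * M = Omega n) (x y : Fin n ⊕ Fin n → ZMod 2) :
    symplForm n (M.mulVec x) (M.mulVec y) = symplForm n x y := by
  unfold symplForm
  have key : ∀ z, x ⬝ᵥ (Mᵀ.mulVec z) = (M.mulVec x) ⬝ᵥ z := by
    intro z; rw [dotProduct_mulVec, vecMul_transpose]
  rw [← key, mulVec_mulVec, mulVec_mulVec, hM]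

lemma mulVec_inj_of_sympl {n : ℕ} {M : Matrix (Fin n ⊕ Fin n) (Fin n ⊕ Fin n) (ZMod 2)}
    (hM : Mᵀ * Omega n * M = Omega n) : Function.Injective M.mulVec := by
  have hid : ∀ x : Fin n ⊕ Fin n → ZMod 2, (Omega n).mulVec ((Omega n).mulVec x) = x := by
    intro x; rw [mulVec_mulVec, omega_mul_omega, one_mulVec]
  intro a b hab
  have h2 : Mᵀ.mulVec ((Omega n).mulVec (M.mulVec a))
      = Mᵀ.mulVec ((Omega n).mulVec (M.mulVec b)) := by rw [hab]
  rw [mulVec_mulVec, mulVec_mulVec, mulVec_mulVec, mulVec_mulVec, hM] at h2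
  calc a = (Omega n).mulVec ((Omega n).mulVec a) := (hid a).symm
    _ = (Omega n).mulVec ((Omega n).mulVec b) := by rw [h2]
    _ = b := hid b

lemma single_inr_comp_inr {n : ℕ} (j : Fin n) :
    (Pi.single (Sum.inr j) (1:ZMod 2) : Fin n ⊕ Fin n → ZMod 2) ∘ Sum.inr = Pi.single j 1 := by
  funext i
  simp [Pi.single_apply]

lemma single_inr_comp_inl {n : ℕ} (j : Fin n) (i : Fin n) :
    (Pi.single (Sum.inr j) (1:ZMod 2) : Fin n ⊕ Fin n → ZMod 2) (Sum.inl i) = 0 := by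
  simp [Pi.single_apply]

lemma single_inl_comp_inl {n : ℕ} (j : Fin n) :
    (Pi.single (Sum.inl j) (1:ZMod 2) : Fin n ⊕ Fin n → ZMod 2) ∘ Sum.inl = Pi.single j 1 := by
  funext i
  simp [Pi.single_apply]

lemma single_inl_comp_inr {n : ℕ} (j : Fin n) :
    (Pi.single (Sum.inl j) (1:ZMod 2) : Fin n ⊕ Fin n → ZMod 2) ∘ Sum.inr = 0 := by
  funext i
  simp [Pi.single_apply]

lemma vecMulVec_mulVec' {n : ℕ} (a b x : Fin n → ZMod 2) :
    (vecMulVec a b).mulVec x = (b ⬝ᵥ x) • a := by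
  funext i
  simp only [Matrix.mulVec, dotProduct, Matrix.vecMulVec_apply, Pi.smul_apply,
    smul_eq_mul, mul_assoc, ← Finset.mul_sum]
  ring

section Construct

variable {n : ℕ}

lemma exists_sympl (hn : 1 < n) (v w : Fin n ⊕ Fin n → ZMod 2)
    (hv1 : ∀ i, v (Sum.inl i) = 0) (hv2 : v (Sum.inr ⟨0, by omega⟩) = 0) (hvne : v ≠ 0)
    (hw : symplForm n w v = 1) :
    ∃ M : Matrix (Fin n ⊕ Fin n) (Fin n ⊕ Fin n) (ZMod 2),
      Mᵀ * Omega n * M = Omega n ∧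
      (∀ x : Fin n ⊕ Fin n → ZMod 2, (∀ i, x (Sum.inl i) = 0) →
        ∃ y' : Fin n → ZMod 2, M.mulVec x = Sum.elim (0 : Fin n → ZMod 2) y' ∧ y' ⟨0, by omega⟩ = x (Sum.inr ⟨0, by omega⟩)) ∧
      (∀ u : Fin n ⊕ Fin n → ZMod 2, (∀ i, u (Sum.inl i) = 0) → u (Sum.inr ⟨0, by omega⟩) = 0 →
        ∃ x, (∀ i, x (Sum.inl i) = 0) ∧ x (Sum.inr ⟨0, by omega⟩) = 0 ∧ M.mulVec x = u) ∧
      M.mulVec (Pi.single (Sum.inr ⟨n - 1, by omega⟩) 1) = v ∧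
      M.mulVec (Pi.single (Sum.inl ⟨n - 1, by omega⟩) 1) = w := by
  classical
  set z0 : Fin n := ⟨0, by omega⟩ with hz0
  set m : Fin n := ⟨n - 1, by omega⟩ with hmdef
  have hmz : m ≠ z0 := by
    intro h
    have := congrArg Fin.val h
    simp [hmdef, hz0] at this
    omega
  set y : Fin n → ZMod 2 := v ∘ Sum.inr with hy
  set w₁ : Fin n → ZMod 2 := w ∘ Sum.inl with hw₁
  set w₂ : Fin n → ZMod 2 := w ∘ Sum.inr with hw₂
  have hy0 : y z0 = 0 := hv2
  have hvinl : v ∘ Sum.inl = 0 := funext hv1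
  have hdot : w₁ ⬝ᵥ y = 1 := by
    rw [symplForm_eq, hvinl, dotProduct_zero, add_zero] at hw
    exact hw
  have hyne : ∃ k, y k = 1 := by
    by_contra hcon
    push_neg at hcon
    apply hvne
    funext x
    cases x with
    | inl i => exact hv1 i
    | inr i =>
      show v (Sum.inr i) = 0
      exact (by decide : ∀ a : ZMod 2, a ≠ 1 → a = 0) (y i) (hcon i)
  obtain ⟨k, hk⟩ := hyne
  have hkz : k ≠ z0 := fun h => by rw [h, hy0] at hk; exact absurd hk (by decide)
  set τ : Equiv.Perm (Fin n) := Equiv.swap k m with hτ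
  have hτm : τ m = k := Equiv.swap_apply_right k m
  have hτz : τ z0 = z0 := Equiv.swap_apply_of_ne_of_ne (Ne.symm hkz) (Ne.symm hmz)
  set d : Fin n → Fin n → ZMod 2 :=
    fun j => if j = m then y else Pi.single (τ j) 1 + w₁ (τ j) • y with hd
  set D : Matrix (Fin n) (Fin n) (ZMod 2) := Matrix.of fun i j => d j i with hD
  have F6 : ∀ (c : Fin n → ZMod 2) (i : Fin n), D.mulVec c i
      = (c m + ∑ j ∈ Finset.univ.erase m, c j * w₁ (τ j)) * y i
        + ∑ j ∈ Finset.univ.erase m, c j * (Pi.single (τ j) 1 : Fin n → ZMod 2) i := by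
    intro c i
    have h0 : D.mulVec c i = ∑ j, d j i * c j := by
      simp [hD, Matrix.mulVec, dotProduct]
    rw [h0, ← Finset.add_sum_erase _ _ (Finset.mem_univ m)]
    have h1 : d m i = y i := by simp [hd]
    have h2 : ∀ j ∈ Finset.univ.erase m,
        d j i * c j = c j * (Pi.single (τ j) 1 : Fin n → ZMod 2) i + c j * w₁ (τ j) * y i := by
      intro j hj
      have hjm : j ≠ m := Finset.ne_of_mem_erase hj
      simp only [hd, if_neg hjm, Pi.add_apply, Pi.smul_apply, smul_eq_mul]
      ring
    rw [Finset.sum_congr rfl h2, Finset.sum_add_distrib, h1, add_mul, Finset.sum_mul]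
    ring
  have F7 : Function.Injective D.mulVec := by
    have key : ∀ c, D.mulVec c = 0 → c = 0 := by
      intro c h
      have hs : c m + ∑ j ∈ Finset.univ.erase m, c j * w₁ (τ j) = 0 := by
        have hck := congrFun h k
        rw [F6] at hck
        have hz : ∑ j ∈ Finset.univ.erase m, c j * (Pi.single (τ j) 1 : Fin n → ZMod 2) k = 0 := by
          apply Finset.sum_eq_zero
          intro j hj
          have hjm : j ≠ m := Finset.ne_of_mem_erase hj
          have hne : k ≠ τ j := by
            intro hkj
            exact hjm (τ.injective (by rw [← hkj, hτm]))
          rw [Pi.single_eq_of_ne hne, mul_zero]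
        rw [hz, hk, mul_one, add_zero] at hck
        exact hck
      have hcj : ∀ j, j ≠ m → c j = 0 := by
        intro j hjm
        have hcj' := congrFun h (τ j)
        rw [F6, hs, zero_mul, zero_add] at hcj'
        rw [Finset.sum_eq_single j] at hcj'
        · rwa [Pi.single_eq_same, mul_one] at hcj'
        · intro b hb hbj
          have hne : (τ j) ≠ τ b := fun hh => hbj (τ.injective hh).symm
          rw [Pi.single_eq_of_ne hne, mul_zero]
        · intro hj
          exact absurd (Finset.mem_erase.mpr ⟨hjm, Finset.mem_univ j⟩) hj
      have hcm : c m = 0 := by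
        have hsum : ∑ j ∈ Finset.univ.erase m, c j * w₁ (τ j) = 0 :=
          Finset.sum_eq_zero fun j hj => by rw [hcj j (Finset.ne_of_mem_erase hj), zero_mul]
        rwa [hsum, add_zero] at hs
      funext j
      by_cases hj : j = m
      · rw [hj]; exact hcm
      · exact hcj j hj
    intro a b hab
    have h1 : D.mulVec (a - b) = 0 := by
      rw [Matrix.mulVec_sub, hab, sub_self]
    exact sub_eq_zero.mp (key _ h1)
  have hDdet : IsUnit D.det := (Matrix.isUnit_iff_isUnit_det D).mp
    (Matrix.mulVec_injective_iff_isUnit.mp F7)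
  have F9 : D.mulVec (Pi.single m 1) = y := by
    rw [Matrix.mulVec_single]
    funext i
    simp [hD, hd]
  have F4 : ∀ (c : Fin n → ZMod 2), (D.mulVec c) z0 = c z0 := by
    intro c
    have hrow : ∀ j, D z0 j = if j = z0 then 1 else 0 := by
      intro j
      by_cases hj : j = m
      · subst hj
        simp [hD, hd, hy0, if_neg hmz]
      · have hdj : d j z0 = (Pi.single (τ j) 1 : Fin n → ZMod 2) z0 + w₁ (τ j) * y z0 := by
          simp [hd, if_neg hj]
        rw [show D z0 j = d j z0 from rfl, hdj, hy0, mul_zero, add_zero, Pi.single_apply]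
        congr 1
        simp only [eq_iff_iff]
        constructor
        · intro h; exact (τ.injective (by rw [← h, hτz])).symm
        · intro h; rw [h, hτz]
    simp only [Matrix.mulVec, dotProduct]
    rw [Finset.sum_congr rfl (fun j _ => by rw [hrow j, ite_mul, one_mul, zero_mul])]
    simp
  have F4' : ∀ (z : Fin n → ZMod 2), (D⁻¹.mulVec z) z0 = z z0 := by
    intro z
    have h := F4 (D⁻¹.mulVec z)
    rw [mulVec_mulVec, Matrix.mul_nonsing_inv D hDdet, one_mulVec] at h
    exact h.symm
  have F5 : ∀ j, w₁ ⬝ᵥ d j = if j = m then 1 else 0 := by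
    intro j
    by_cases hj : j = m
    · subst hj
      have hdm : d m = y := by simp [hd]
      rw [hdm, hdot, if_pos rfl]
    · rw [if_neg hj]
      simp only [hd, if_neg hj, dotProduct_add, dotProduct_smul, dotProduct_single, mul_one,
        smul_eq_mul, hdot]
      exact zmod2_add_self _
  have F10 : Dᵀ.mulVec w₁ = Pi.single m 1 := by
    funext j
    have h1 : Dᵀ.mulVec w₁ j = w₁ ⬝ᵥ d j := by
      simp only [Matrix.mulVec, dotProduct, Matrix.transpose_apply, hD, Matrix.of_apply]
      exact Finset.sum_congr rfl fun i _ => mul_comm _ _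
    rw [h1, F5 j, Pi.single_apply]
  set A : Matrix (Fin n) (Fin n) (ZMod 2) := (D⁻¹)ᵀ with hA
  have F12 : Aᵀ * D = 1 := by
    rw [hA, transpose_transpose]
    exact Matrix.nonsing_inv_mul D hDdet
  have F13 : Dᵀ * A = 1 := by
    rw [hA, ← Matrix.transpose_mul, Matrix.nonsing_inv_mul D hDdet, Matrix.transpose_one]
  have F14 : A.mulVec (Pi.single m 1) = w₁ := by
    rw [← F10, mulVec_mulVec, hA, ← Matrix.transpose_mul,
      Matrix.mul_nonsing_inv D hDdet, Matrix.transpose_one, one_mulVec]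
  set em : Fin n → ZMod 2 := Pi.single m 1 with hem
  set t : Fin n → ZMod 2 := D⁻¹.mulVec w₂ with ht
  set C : Matrix (Fin n) (Fin n) (ZMod 2) :=
    vecMulVec t em + vecMulVec em t + t m • vecMulVec em em with hC
  have F15 : Cᵀ = C := by
    ext i j
    simp only [hC, Matrix.transpose_apply, Matrix.add_apply, Matrix.smul_apply,
      Matrix.vecMulVec_apply, smul_eq_mul]
    ring
  have F16 : C.mulVec em = t := by
    have h1 : em ⬝ᵥ em = 1 := by
      rw [hem, dotProduct_single, Pi.single_eq_same, mul_one]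
    have h2 : t ⬝ᵥ em = t m := by
      rw [hem, dotProduct_single, mul_one]
    rw [hC, Matrix.add_mulVec, Matrix.add_mulVec, Matrix.smul_mulVec,
      vecMulVec_mulVec', vecMulVec_mulVec', vecMulVec_mulVec', h1, h2, one_smul]
    funext i
    simp only [Pi.add_apply, Pi.smul_apply, smul_eq_mul, one_mul]
    exact zmod2_abb _ _
  have F17 : D.mulVec t = w₂ := by
    rw [ht, mulVec_mulVec, Matrix.mul_nonsing_inv D hDdet, one_mulVec]
  set M : Matrix (Fin n ⊕ Fin n) (Fin n ⊕ Fin n) (ZMod 2) :=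
    Matrix.fromBlocks A 0 (D * C) D with hM
  have hTL : (D * C)ᵀ * A + Aᵀ * (D * C) = 0 := by
    have e1 : (D * C)ᵀ * A = C := by
      rw [Matrix.transpose_mul, Matrix.mul_assoc, F13, Matrix.mul_one, F15]
    have e2 : Aᵀ * (D * C) = C := by
      rw [← Matrix.mul_assoc, F12, Matrix.one_mul]
    rw [e1, e2]
    ext i j
    exact zmod2_add_self _
  have hMsym : Mᵀ * Omega n * M = Omega n := by
    have hMt : Mᵀ = Matrix.fromBlocks Aᵀ (D * C)ᵀ 0 Dᵀ := by
      rw [hM, Matrix.fromBlocks_transpose, Matrix.transpose_zero]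
    have h1 : Mᵀ * Omega n = Matrix.fromBlocks ((D * C)ᵀ) Aᵀ Dᵀ 0 := by
      rw [hMt]
      show _ * Matrix.fromBlocks 0 1 1 0 = _
      rw [Matrix.fromBlocks_multiply]
      simp only [Matrix.mul_zero, Matrix.mul_one, Matrix.zero_mul, zero_add, add_zero]
    have h2 : Mᵀ * Omega n * M
        = Matrix.fromBlocks ((D * C)ᵀ * A + Aᵀ * (D * C)) (Aᵀ * D) (Dᵀ * A) 0 := by
      rw [h1, hM, Matrix.fromBlocks_multiply]
      simp only [Matrix.mul_zero, Matrix.zero_mul, zero_add, add_zero]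
    rw [h2, hTL, F12, F13]
    rfl
  refine ⟨M, hMsym, ?_, ?_, ?_, ?_⟩
  · intro x hx
    refine ⟨D.mulVec (x ∘ Sum.inr), ?_, ?_⟩
    · rw [hM, fromBlocks_mulVec]
      have hxl : x ∘ Sum.inl = 0 := funext hx
      rw [hxl]
      simp [Matrix.mulVec_zero]
    · exact F4 _
  · intro u hu1 hu2
    refine ⟨Sum.elim 0 (D⁻¹.mulVec (u ∘ Sum.inr)), fun i => rfl, F4' _ |>.trans hu2, ?_⟩
    rw [hM, fromBlocks_mulVec]
    have h1 : (Sum.elim (0 : Fin n → ZMod 2) (D⁻¹.mulVec (u ∘ Sum.inr))) ∘ Sum.inl = 0 := rfl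
    have h2 : (Sum.elim (0 : Fin n → ZMod 2) (D⁻¹.mulVec (u ∘ Sum.inr))) ∘ Sum.inr
        = D⁻¹.mulVec (u ∘ Sum.inr) := rfl
    rw [h1, h2]
    simp only [Matrix.mulVec_zero, Matrix.zero_mulVec, Matrix.zero_mul, zero_add, add_zero,
      mulVec_mulVec, Matrix.mul_nonsing_inv D hDdet, one_mulVec]
    funext s
    cases s with
    | inl i => exact (hu1 i).symm
    | inr i => rfl
  · rw [hM, fromBlocks_mulVec]
    have h1 : (Pi.single (Sum.inr ⟨n-1, by omega⟩) (1:ZMod 2) : Fin n ⊕ Fin n → ZMod 2) ∘ Sum.inl = 0 :=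
      funext fun i => single_inr_comp_inl _ i
    have h2 := single_inr_comp_inr (n := n) ⟨n-1, by omega⟩
    rw [h1, h2]
    simp only [Matrix.mulVec_zero, Matrix.zero_mulVec, zero_add, add_zero]
    rw [show (⟨n-1, by omega⟩ : Fin n) = m from rfl, F9]
    funext s
    cases s with
    | inl i => exact (hv1 i).symm
    | inr i => rfl
  · rw [hM, fromBlocks_mulVec]
    have h1 := single_inl_comp_inl (n := n) ⟨n-1, by omega⟩
    have h2 := single_inl_comp_inr (n := n) ⟨n-1, by omega⟩
    rw [h1, h2]
    simp only [Matrix.mulVec_zero, Matrix.zero_mulVec, zero_add, add_zero]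
    rw [show (⟨n-1, by omega⟩ : Fin n) = m from rfl, F14, ← hem,
      ← mulVec_mulVec, F16, F17]
    funext s
    cases s with
    | inl i => rfl
    | inr i => rfl

end Construct
lemma card_compl_add {α : Type*} [Finite α] (p : α → Prop) :
    Nat.card {x // p x} + Nat.card {x // ¬ p x} = Nat.card α := by
  classical
  rw [← Nat.card_sum]
  exact Nat.card_congr (Equiv.sumCompl p)

lemma card_total (n : ℕ) : Nat.card (Fin n ⊕ Fin n → ZMod 2) = 2 ^ (2 * n) := by
  rw [Nat.card_eq_fintype_card, Fintype.card_fun]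
  simp [ZMod.card, Fintype.card_sum, Fintype.card_fin, two_mul]

lemma card_fiber {n : ℕ} (hn : 0 < n) (u : Fin n ⊕ Fin n → ZMod 2) (i₀ : Fin n ⊕ Fin n)
    (hu : u i₀ = 1) :
    Nat.card {w : Fin n ⊕ Fin n → ZMod 2 // w ⬝ᵥ u = 1} = 2 ^ (2 * n - 1) := by
  classical
  have hadd : ∀ w : Fin n ⊕ Fin n → ZMod 2, (w + Pi.single i₀ 1) ⬝ᵥ u = w ⬝ᵥ u + 1 := by
    intro w
    rw [add_dotProduct, single_dotProduct, hu, mul_one]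
  have hss : (Pi.single i₀ (1 : ZMod 2) : Fin n ⊕ Fin n → ZMod 2) + Pi.single i₀ 1 = 0 := by
    funext x
    exact zmod2_add_self _
  have e2 : {w : Fin n ⊕ Fin n → ZMod 2 // w ⬝ᵥ u = 0}
      ≃ {w : Fin n ⊕ Fin n → ZMod 2 // w ⬝ᵥ u = 1} :=
    { toFun := fun w => ⟨w.1 + Pi.single i₀ 1, by rw [hadd, w.2, zero_add]⟩
      invFun := fun w => ⟨w.1 + Pi.single i₀ 1, by rw [hadd, w.2]; decide⟩
      left_inv := fun w => Subtype.ext (by show w.1 + _ + _ = w.1; rw [add_assoc, hss, add_zero])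
      right_inv := fun w => Subtype.ext (by show w.1 + _ + _ = w.1; rw [add_assoc, hss, add_zero]) }
  have e1 : {w : Fin n ⊕ Fin n → ZMod 2 // ¬ (w ⬝ᵥ u = 0)}
      ≃ {w : Fin n ⊕ Fin n → ZMod 2 // w ⬝ᵥ u = 1} :=
    Equiv.subtypeEquivRight (fun w =>
      ⟨fun h => zmod2_ne _ h, fun h => by rw [h]; exact one_ne_zero⟩)
  have h0 := card_compl_add (fun w : Fin n ⊕ Fin n → ZMod 2 => w ⬝ᵥ u = 0)
  have hA := Nat.card_congr e1
  have hB := Nat.card_congr e2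
  have hC := card_total n
  have hp : 2 ^ (2 * n) = 2 ^ (2 * n - 1) * 2 := by
    rw [← pow_succ]
    congr 1
    omega
  omega

lemma nat_card_sigma_const {ι : Type*} [Finite ι] {f : ι → Type*} [∀ i, Finite (f i)]
    (c : ℕ) (h : ∀ i, Nat.card (f i) = c) : Nat.card (Σ i, f i) = Nat.card ι * c := by
  classical
  cases nonempty_fintype ι
  letI : ∀ i, Fintype (f i) := fun i => Fintype.ofFinite _
  rw [Nat.card_eq_fintype_card, Nat.card_eq_fintype_card, Fintype.card_sigma]
  have h' : ∀ i : ι, Fintype.card (f i) = c := fun i => by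
    rw [← Nat.card_eq_fintype_card]; exact h i
  simp [h', Finset.sum_const, Finset.card_univ, mul_comm]
end PairAux

theorem pair_orbit_of_distillation_subgroup (n : ℕ) (hn : 1 < n) :
    pairOrbit n hn =
      {p | p.1 ∈ base n (by omega) ∧ p.1 ≠ 0 ∧ symplForm n p.2 p.1 = 1} ∧
    Nat.card (pairOrbit n hn) = (2 ^ (n - 1) - 1) * 2 ^ (2 * n - 1) := by
  classical
  have hn0 : (0 : ℕ) < n := by omega
  have hmz : (⟨n - 1, by omega⟩ : Fin n) ≠ (⟨0, hn0⟩ : Fin n) := by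
    intro h
    have := congrArg Fin.val h
    simp at this
    omega
  have hEq : pairOrbit n hn
      = {p | p.1 ∈ base n (by omega) ∧ p.1 ≠ 0 ∧ symplForm n p.2 p.1 = 1} := by
    ext p
    constructor
    · rintro ⟨M, hM, himg, h3, h4⟩
      have hsingle_mem : (Pi.single (Sum.inr (⟨n - 1, by omega⟩ : Fin n)) (1 : ZMod 2) :
          Fin n ⊕ Fin n → ZMod 2) ∈ base n hn0 := by
        constructor
        · intro i
          exact PairAux.single_inr_comp_inl _ i
        · apply Pi.single_eq_of_ne
          intro hcon
          exact hmz (Sum.inr_injective hcon).symm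
      refine ⟨?_, ?_, ?_⟩
      · rw [← h3, ← himg]
        exact Set.mem_image_of_mem _ hsingle_mem
      · rw [← h3]
        intro h0
        have h0' : M.mulVec (Pi.single (Sum.inr (⟨n - 1, by omega⟩ : Fin n)) (1 : ZMod 2))
            = M.mulVec 0 := by rw [h0, Matrix.mulVec_zero]
        have := PairAux.mulVec_inj_of_sympl hM h0'
        have h1 := congrFun this (Sum.inr (⟨n - 1, by omega⟩ : Fin n))
        rw [Pi.single_eq_same] at h1
        exact one_ne_zero h1
      · rw [← h3, ← h4, PairAux.symplForm_mulVec hM, PairAux.symplForm_eq,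
          PairAux.single_inl_comp_inl, PairAux.single_inl_comp_inr,
          PairAux.single_inr_comp_inr]
        rw [dotProduct_single, Pi.single_eq_same, mul_one, zero_dotProduct, add_zero]
    · rintro ⟨hmem, hne, hsym⟩
      obtain ⟨M, hMsym, himg1, himg2, h3, h4⟩ :=
        PairAux.exists_sympl hn p.1 p.2 hmem.1 hmem.2 hne hsym
      refine ⟨M, hMsym, ?_, h3, h4⟩
      apply Set.Subset.antisymm
      · rintro u ⟨x, hx, rfl⟩
        obtain ⟨y', hy1, hy2⟩ := himg1 x hx.1
        rw [hy1]
        refine ⟨fun i => rfl, ?_⟩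
        show y' ⟨0, by omega⟩ = 0
        rw [hy2]
        exact hx.2
      · intro u hu
        obtain ⟨x, hx1, hx2, hx3⟩ := himg2 u hu.1 hu.2
        exact ⟨x, ⟨hx1, hx2⟩, hx3⟩
  refine ⟨hEq, ?_⟩
  rw [hEq]
  have eS : ↥{p : (Fin n ⊕ Fin n → ZMod 2) × (Fin n ⊕ Fin n → ZMod 2) |
        p.1 ∈ base n (by omega : (0:ℕ) < n) ∧ p.1 ≠ 0 ∧ symplForm n p.2 p.1 = 1}
      ≃ (Σ v : {v : Fin n ⊕ Fin n → ZMod 2 // v ∈ base n hn0 ∧ v ≠ 0},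
          {w : Fin n ⊕ Fin n → ZMod 2 // symplForm n w v.1 = 1}) :=
    { toFun := fun x => ⟨⟨x.1.1, x.2.1, x.2.2.1⟩, ⟨x.1.2, x.2.2.2⟩⟩
      invFun := fun s => ⟨(s.1.1, s.2.1), ⟨s.1.2.1, s.1.2.2, s.2.2⟩⟩
      left_inv := fun x => rfl
      right_inv := fun s => rfl }
  have hfib : ∀ v : {v : Fin n ⊕ Fin n → ZMod 2 // v ∈ base n hn0 ∧ v ≠ 0},
      Nat.card {w : Fin n ⊕ Fin n → ZMod 2 // symplForm n w v.1 = 1} = 2 ^ (2 * n - 1) := by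
    intro v
    obtain ⟨x, hx⟩ := Function.ne_iff.mp v.2.2
    have hux : ((Omega n).mulVec v.1) (Sum.swap x) = v.1 x := by
      rw [PairAux.omega_mulVec]
      cases x <;> rfl
    have hu1 : ((Omega n).mulVec v.1) (Sum.swap x) = 1 :=
      PairAux.zmod2_ne _ (by rw [hux]; exact hx)
    exact PairAux.card_fiber hn0 ((Omega n).mulVec v.1) (Sum.swap x) hu1
  have eB : {v : Fin n ⊕ Fin n → ZMod 2 // v ∈ base n hn0 ∧ v ≠ 0}
      ≃ {g : ({i : Fin n // i ≠ (⟨0, hn0⟩ : Fin n)} → ZMod 2) // g ≠ 0} :=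
    { toFun := fun v => ⟨fun i => v.1 (Sum.inr i.1), fun h0 => v.2.2 (by
        funext x
        cases x with
        | inl i => exact v.2.1.1 i
        | inr i =>
          by_cases hi : i = (⟨0, hn0⟩ : Fin n)
          · rw [hi]; exact v.2.1.2
          · exact congrFun h0 ⟨i, hi⟩)⟩
      invFun := fun g =>
        ⟨Sum.elim 0 (fun i => if h : i = (⟨0, hn0⟩ : Fin n) then 0 else g.1 ⟨i, h⟩),
          ⟨⟨fun i => rfl, by simp⟩, fun h0 => by
            obtain ⟨i, hi⟩ := Function.ne_iff.mp g.2
            apply hi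
            have h1 := congrFun h0 (Sum.inr i.1)
            simp only [Sum.elim_inr, dif_neg i.2, Pi.zero_apply] at h1
            exact h1⟩⟩
      left_inv := fun v => Subtype.ext (funext fun x => by
        cases x with
        | inl i => exact (v.2.1.1 i).symm
        | inr i =>
          show (if h : i = (⟨0, hn0⟩ : Fin n) then 0 else v.1 (Sum.inr i)) = v.1 (Sum.inr i)
          by_cases hi : i = (⟨0, hn0⟩ : Fin n)
          · rw [dif_pos hi, hi]
            exact v.2.1.2.symm
          · rw [dif_neg hi])
      right_inv := fun g => Subtype.ext (funext fun i => by
        show (if h : i.1 = (⟨0, hn0⟩ : Fin n) then 0 else g.1 ⟨i.1, h⟩) = g.1 i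
        rw [dif_neg i.2]) }
  have hκ : Nat.card {i : Fin n // i ≠ (⟨0, hn0⟩ : Fin n)} = n - 1 := by
    have h := PairAux.card_compl_add (fun i : Fin n => i = (⟨0, hn0⟩ : Fin n))
    have hu : Nat.card {i : Fin n // i = (⟨0, hn0⟩ : Fin n)} = 1 := by
      haveI : Unique {i : Fin n // i = (⟨0, hn0⟩ : Fin n)} :=
        ⟨⟨⟨⟨0, hn0⟩, rfl⟩⟩, fun a => Subtype.ext a.2⟩
      exact Nat.card_unique
    rw [hu] at h
    rw [Nat.card_eq_fintype_card (α := Fin n), Fintype.card_fin] at h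
    have hconv : Nat.card {i : Fin n // ¬ (i = (⟨0, hn0⟩ : Fin n))}
        = Nat.card {i : Fin n // i ≠ (⟨0, hn0⟩ : Fin n)} := rfl
    omega
  have hfun : Nat.card ({i : Fin n // i ≠ (⟨0, hn0⟩ : Fin n)} → ZMod 2) = 2 ^ (n - 1) := by
    rw [Nat.card_eq_fintype_card, Fintype.card_fun, ZMod.card]
    congr 1
    rw [← Nat.card_eq_fintype_card]
    exact hκ
  have hBg : Nat.card {g : ({i : Fin n // i ≠ (⟨0, hn0⟩ : Fin n)} → ZMod 2) // g ≠ 0}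
      = 2 ^ (n - 1) - 1 := by
    have h := PairAux.card_compl_add
      (fun g : ({i : Fin n // i ≠ (⟨0, hn0⟩ : Fin n)} → ZMod 2) => g = 0)
    have hu : Nat.card {g : ({i : Fin n // i ≠ (⟨0, hn0⟩ : Fin n)} → ZMod 2) // g = 0} = 1 := by
      haveI : Unique {g : ({i : Fin n // i ≠ (⟨0, hn0⟩ : Fin n)} → ZMod 2) // g = 0} :=
        ⟨⟨⟨0, rfl⟩⟩, fun a => Subtype.ext a.2⟩
      exact Nat.card_unique
    rw [hu, hfun] at h
    have hconv : Nat.card {g : ({i : Fin n // i ≠ (⟨0, hn0⟩ : Fin n)} → ZMod 2) // ¬ (g = 0)}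
        = Nat.card {g : ({i : Fin n // i ≠ (⟨0, hn0⟩ : Fin n)} → ZMod 2) // g ≠ 0} := rfl
    omega
  have hB' : Nat.card {v : Fin n ⊕ Fin n → ZMod 2 // v ∈ base n hn0 ∧ v ≠ 0}
      = 2 ^ (n - 1) - 1 := by
    rw [Nat.card_congr eB]
    exact hBg
  rw [Nat.card_congr eS, PairAux.nat_card_sigma_const _ hfib, hB']
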